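/- Let a_h > a_0 ≥ 1 be positive integers and λ > 1, and set V₀ = [ψ₁(a_h) − ψ₁(λ·a_h)] − [ψ₁(a_0) − ψ₁(λ·a_0)]. Then V₀ < 0. -/

import Mathlib

/-- The digamma function: the logarithmic derivative of the Gamma function. -/
noncomputable def digamma (x : ℝ) : ℝ :=
  deriv (fun y : ℝ => Real.log (Real.Gamma y)) x

/-- The trigamma function: the derivative of the digamma function. -/
noncomputable def trigamma (x : ℝ) : ℝ := deriv digamma x

open Filter Topology Finset Set


noncomputable def psiD (x : ℝ) : ℝ :=
  -Real.eulerMascheroniConstant + ∑' k : ℕ, (1/((k:ℝ)+1) - 1/(x+k))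
noncomputable def psiT (x : ℝ) : ℝ := ∑' k : ℕ, 1/((x+(k:ℝ))^2)
noncomputable def psiS3 (x : ℝ) : ℝ := ∑' k : ℕ, 1/((x+(k:ℝ))^3)
noncomputable def psiS4 (x : ℝ) : ℝ := ∑' k : ℕ, 1/((x+(k:ℝ))^4)

lemma aux_min_bound {x : ℝ} (hx : 0 < x) (k : ℕ) : min x 1 * ((k:ℝ)+1) ≤ x + k := by
  rcases le_total x 1 with h | h
  · rw [min_eq_left h]
    nlinarith [Nat.cast_nonneg (α := ℝ) k]
  · rw [min_eq_right h]
    nlinarith [Nat.cast_nonneg (α := ℝ) k]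

lemma psi_summable {x : ℝ} (hx : 0 < x) {p : ℕ} (hp : 2 ≤ p) :
    Summable (fun k : ℕ => 1/((x+(k:ℝ))^p)) := by
  have hmin : 0 < min x 1 := lt_min hx one_pos
  have hs : Summable (fun k : ℕ => (1/(min x 1)^p) * (1/(((k:ℝ)+1)^p))) := by
    apply Summable.mul_left
    have := (summable_nat_add_iff (f := fun n : ℕ => 1/((n:ℝ)^p)) 1).2
      (Real.summable_one_div_nat_pow.2 hp)
    simpa using this
  apply Summable.of_nonneg_of_le (fun k => by positivity) (fun k => ?_) hs
  have h1 : (0:ℝ) < min x 1 * ((k:ℝ)+1) := by positivity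
  have h2 : min x 1 * ((k:ℝ)+1) ≤ x + k := aux_min_bound hx k
  have := pow_le_pow_left₀ h1.le h2 p
  rw [mul_pow] at this
  rw [one_div, one_div, one_div, ← mul_inv]
  exact inv_anti₀ (by positivity) this

example : True := trivial

lemma psi_pos_terms {x : ℝ} (hx : 0 < x) (p k : ℕ) : (0:ℝ) < 1/((x+(k:ℝ))^p) := by
  have : (0:ℝ) < x + k := by positivity
  positivity

/-- Midpoint upper bound for `psiS3`. -/
lemma psiS3_le {y : ℝ} (hy : 1 ≤ y) : psiS3 y ≤ 1/(2*(y-1/2)^2) := by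
  have hy0 : (0:ℝ) < y := by linarith
  apply Summable.tsum_le_of_sum_range_le (psi_summable hy0 (by norm_num))
  intro n
  have key : ∀ k : ℕ, 1/((y+(k:ℝ))^3) ≤
      1/(2*(y+(k:ℝ)-1/2)^2) - 1/(2*(y+(k:ℝ)+1-1/2)^2) := by
    intro k
    have hk : (0:ℝ) ≤ k := Nat.cast_nonneg k
    have h1 : (0:ℝ) < y + k - 1/2 := by linarith
    have h2 : (0:ℝ) < y + k + 1 - 1/2 := by linarith
    have h3 : (0:ℝ) < y + k := by linarith
    rw [div_sub_div _ _ (by positivity) (by positivity), div_le_div_iff₀ (by positivity) (by positivity)]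
    ring_nf
    nlinarith [sq_nonneg (y+(k:ℝ)), sq_nonneg (y+(k:ℝ)-1/2), mul_pos h3 h3, mul_pos (mul_pos h3 h3) h3]
  calc ∑ k ∈ range n, 1/((y+(k:ℝ))^3)
      ≤ ∑ k ∈ range n, (1/(2*(y+(k:ℝ)-1/2)^2) - 1/(2*(y+(k:ℝ)+1-1/2)^2)) :=
        Finset.sum_le_sum (fun k _ => key k)
    _ = ∑ k ∈ range n, (1/(2*(y+(k:ℝ)-1/2)^2) - 1/(2*(y+((k+1:ℕ):ℝ)-1/2)^2)) := by
        apply Finset.sum_congr rfl; intro k _; push_cast; ring_nf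
    _ = 1/(2*(y+((0:ℕ):ℝ)-1/2)^2) - 1/(2*(y+(n:ℝ)-1/2)^2) :=
        Finset.sum_range_sub' (f := fun k : ℕ => 1/(2*(y+(k:ℝ)-1/2)^2)) n
    _ ≤ 1/(2*(y-1/2)^2) := by
        have h1 : (0:ℝ) < y + n - 1/2 := by
          have : (0:ℝ) ≤ n := Nat.cast_nonneg n; linarith
        have : (0:ℝ) < 1/(2*(y+(n:ℝ)-1/2)^2) := by positivity
        push_cast
        simp only [add_zero]
        linarith

lemma tendsto_inv_pow_aux {y : ℝ} (hy : 0 < y) {p : ℕ} (hp : 1 ≤ p) :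
    Tendsto (fun k : ℕ => 1/((y+(k:ℝ))^p)) atTop (𝓝 0) := by
  have h1 : Tendsto (fun k : ℕ => y+(k:ℝ)) atTop atTop :=
    tendsto_atTop_add_const_left _ y tendsto_natCast_atTop_atTop
  have h2 : Tendsto (fun k : ℕ => (y+(k:ℝ))^p) atTop atTop :=
    (tendsto_pow_atTop (by omega)).comp h1
  simpa [one_div, Pi.inv_def] using h2.inv_tendsto_atTop

/-- Trapezoid lower bound for `psiS4`. -/
lemma psiS4_ge {y : ℝ} (hy : 1 ≤ y) : 1/(2*y^4) + 1/(3*y^3) ≤ psiS4 y := by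
  have hy0 : (0:ℝ) < y := by linarith
  set f : ℕ → ℝ := fun k => 1/((y+(k:ℝ))^4) with hf_def
  have hf : Summable f := psi_summable hy0 (by norm_num)
  set c : ℕ → ℝ := fun k => (1/3)*(1/((y+(k:ℝ))^3)) with hc_def
  have hpos : ∀ k : ℕ, (0:ℝ) < y + k := fun k => by positivity
  have hcmono : ∀ k : ℕ, c (k+1) ≤ c k := by
    intro k
    have h1 : (0:ℝ) < (y+(k:ℝ))^3 := by positivity
    have h2 : (y+(k:ℝ))^3 ≤ (y+((k+1:ℕ):ℝ))^3 := by
      apply pow_le_pow_left₀ (hpos k).le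
      push_cast; linarith
    have := one_div_le_one_div_of_le h1 h2
    simp only [hc_def]
    nlinarith
  have hg : Summable (fun k => c k - c (k+1)) := by
    apply summable_of_sum_range_le (c := c 0) (fun k => by linarith [hcmono k])
    intro n
    rw [Finset.sum_range_sub' c n]
    have : (0:ℝ) ≤ c n := by simp only [hc_def]; positivity
    linarith
  have htel : HasSum (fun k => c k - c (k+1)) (c 0) := by
    rw [hg.hasSum_iff_tendsto_nat]
    have : Tendsto c atTop (𝓝 0) := by
      simpa [hc_def] using (tendsto_inv_pow_aux hy0 (p := 3) (by norm_num)).const_mul (1/3:ℝ)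
    simpa using (tendsto_const_nhds (x := c 0)).sub this |>.congr
      (fun n => (Finset.sum_range_sub' c n).symm)
  -- termwise bound : c k - c (k+1) ≤ (1/2) * (f k + f (k+1))
  have hterm : ∀ k : ℕ, c k - c (k+1) ≤ (1/2) * (f k + f (k+1)) := by
    intro k
    have ha : (1:ℝ) ≤ y + k := by have := Nat.cast_nonneg (α := ℝ) k; linarith
    set a : ℝ := y + k with ha_def
    have ha0 : (0:ℝ) < a := by linarith
    have ha1 : (0:ℝ) < a + 1 := by linarith
    have hcast : y + ((k+1:ℕ):ℝ) = a + 1 := by push_cast; ring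
    simp only [hc_def, hf_def, hcast, ← ha_def]
    have ha' : a ≠ 0 := ne_of_gt ha0
    have ha1' : a + 1 ≠ 0 := ne_of_gt ha1
    have e_left : (1:ℝ)/3*(1/a^3) - 1/3*(1/(a+1)^3)
        = (2*(a*(a+1)^4 - a^4*(a+1)))/(6*(a^4*(a+1)^4)) := by
      field_simp; ring
    have e_right : (1:ℝ)/2*(1/a^4 + 1/(a+1)^4)
        = (3*((a+1)^4 + a^4))/(6*(a^4*(a+1)^4)) := by
      field_simp; ring
    rw [e_left, e_right]
    have hpoly : 2*(a*(a+1)^4 - a^4*(a+1)) ≤ 3*((a+1)^4 + a^4) := by nlinarith [sq_nonneg a, ha0.le]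
    gcongr
  have hshift : Summable (fun k => f (k+1)) := (summable_nat_add_iff 1).2 hf
  have hsum2 : ∑' k, (1/2) * (f k + f (k+1)) = (1/2) * (psiS4 y + (psiS4 y - f 0)) := by
    rw [tsum_mul_left, hf.tsum_add hshift]
    have h0 : ∑' k, f k = f 0 + ∑' k, f (k+1) := hf.tsum_eq_zero_add
    have : ∑' k, f (k+1) = psiS4 y - f 0 := by
      rw [show psiS4 y = ∑' k, f k from rfl] at *
      linarith
    rw [this]
    rfl
  have hle : c 0 ≤ (1/2) * (psiS4 y + (psiS4 y - f 0)) := by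
    rw [← hsum2, ← htel.tsum_eq]
    exact Summable.tsum_le_tsum hterm hg ((hf.add hshift).mul_left _)
  have hc0 : c 0 = (1/3)*(1/y^3) := by simp [hc_def]
  have hf0 : f 0 = 1/y^4 := by simp [hf_def]
  rw [hc0, hf0] at hle
  have h4 : (0:ℝ) < y^4 := by positivity
  have h3 : (0:ℝ) < y^3 := by positivity
  have e1 : 1/(3*y^3) = (1:ℝ)/3*(1/y^3) := by ring
  have e2 : 1/(2*y^4) = (1:ℝ)/2*(1/y^4) := by ring
  rw [e1, e2]
  linarith

lemma psi_key1 {y : ℝ} (hy : 1 ≤ y) : psiS3 y < 3*y*psiS4 y := by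
  have hy0 : (0:ℝ) < y := by linarith
  have h1 : psiS3 y ≤ 1/(2*(y-1/2)^2) := psiS3_le hy
  have h2 : 3*y*(1/(2*y^4) + 1/(3*y^3)) ≤ 3*y*psiS4 y := by
    have := psiS4_ge hy
    nlinarith
  have h3 : 1/(2*(y-1/2)^2) < 3*y*(1/(2*y^4) + 1/(3*y^3)) := by
    have hA : (0:ℝ) < y - 1/2 := by linarith
    have e : 3*y*(1/(2*y^4) + 1/(3*y^3)) = (3+2*y)/(2*y^3) := by field_simp
    rw [e, div_lt_div_iff₀ (by positivity) (by positivity)]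
    nlinarith [sq_nonneg (y-1), hy0]
  linarith

lemma hasDerivAt_one_div_pow {p : ℕ} (hp : 1 ≤ p) (c : ℝ) {z : ℝ} (h : 0 < z + c) :
    HasDerivAt (fun w => 1/((w+c)^p)) (-(p:ℝ)/((z+c)^(p+1))) z := by
  have h1 : HasDerivAt (fun w : ℝ => w + c) 1 z := (hasDerivAt_id z).add_const c
  have h2 : HasDerivAt (fun w : ℝ => (w+c)^p) ((p:ℝ)*(z+c)^(p-1)*1) z := h1.pow p
  have h3 := h2.inv (pow_ne_zero p (ne_of_gt h))
  have : -((p:ℝ)*(z+c)^(p-1)*1) / ((z+c)^p)^2 = -(p:ℝ)/((z+c)^(p+1)) := by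
    rw [← pow_mul, div_eq_div_iff (by positivity) (by positivity)]
    rw [mul_one, neg_mul, neg_mul, mul_assoc, ← pow_add]
    rw [show p - 1 + (p+1) = p*2 by omega]
  rw [this] at h3
  simpa [one_div, Pi.inv_def] using h3

lemma hasDerivAt_psi_sum {p : ℕ} (hp : 2 ≤ p) {x : ℝ} (hx : 0 < x) :
    HasDerivAt (fun z => ∑' k : ℕ, 1/((z+(k:ℝ))^p))
      (∑' k : ℕ, -(p:ℝ)/((x+(k:ℝ))^(p+1))) x := by
  have hx2 : (0:ℝ) < x/2 := by linarith
  apply hasDerivAt_tsum_of_isPreconnected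
    (g := fun (k : ℕ) (z : ℝ) => 1/((z+(k:ℝ))^p))
    (g' := fun (k : ℕ) (z : ℝ) => -(p:ℝ)/((z+(k:ℝ))^(p+1)))
    (u := fun k : ℕ => (p:ℝ)*(1/((x/2+(k:ℝ))^(p+1))))
    ((psi_summable hx2 (by omega)).mul_left _) isOpen_Ioi isPreconnected_Ioi
    (t := Ioi (x/2)) (y₀ := x)
  · intro n y hy
    exact hasDerivAt_one_div_pow (by omega) (n:ℝ)
      (by have : x/2 < y := hy; have := Nat.cast_nonneg (α := ℝ) n; linarith)
  · intro n y hy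
    have hy' : (0:ℝ) < y := lt_trans hx2 hy
    have hyn : (0:ℝ) < x/2 + n := by positivity
    have hyn' : x/2 + (n:ℝ) ≤ y + n := by have : x/2 < y := hy; linarith
    rw [Real.norm_eq_abs, abs_div, abs_neg, abs_of_nonneg (by positivity : (0:ℝ) ≤ (p:ℝ)),
      abs_of_nonneg (by positivity : (0:ℝ) ≤ (y+(n:ℝ))^(p+1)), mul_one_div]
    apply div_le_div_of_nonneg_left (by positivity) (by positivity)
    exact pow_le_pow_left₀ hyn.le hyn' _
  · exact mem_Ioi.2 (by linarith)
  · exact psi_summable hx hp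
  · exact mem_Ioi.2 (by linarith)

lemma hasDerivAt_psiT {x : ℝ} (hx : 0 < x) : HasDerivAt psiT (-2 * psiS3 x) x := by
  have h := hasDerivAt_psi_sum (p := 2) le_rfl hx
  have e : ∑' k : ℕ, -((2:ℕ):ℝ)/((x+(k:ℝ))^(2+1)) = -2 * psiS3 x := by
    rw [show psiS3 x = ∑' k : ℕ, 1/((x+(k:ℝ))^3) from rfl, ← tsum_mul_left]
    apply tsum_congr; intro k; push_cast; ring
  rw [e] at h
  exact h

lemma hasDerivAt_psiS3 {x : ℝ} (hx : 0 < x) : HasDerivAt psiS3 (-3 * psiS4 x) x := by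
  have h := hasDerivAt_psi_sum (p := 3) (by norm_num) hx
  have e : ∑' k : ℕ, -((3:ℕ):ℝ)/((x+(k:ℝ))^(3+1)) = -3 * psiS4 x := by
    rw [show psiS4 x = ∑' k : ℕ, 1/((x+(k:ℝ))^4) from rfl, ← tsum_mul_left]
    apply tsum_congr; intro k; push_cast; ring
  rw [e] at h
  exact h

lemma psiD_term_eq {x : ℝ} (hx : 0 < x) (k : ℕ) :
    1/((k:ℝ)+1) - 1/(x+k) = (x-1)/(((k:ℝ)+1)*(x+k)) := by
  have h1 : ((k:ℝ)+1) ≠ 0 := by positivity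
  have h2 : (x+(k:ℝ)) ≠ 0 := by positivity
  field_simp
  ring

lemma psiD_summable {x : ℝ} (hx : 0 < x) :
    Summable (fun k : ℕ => 1/((k:ℝ)+1) - 1/(x+k)) := by
  have hmin : 0 < min x 1 := lt_min hx one_pos
  apply Summable.of_norm
  have hs : Summable (fun k : ℕ => (|x-1|/(min x 1)) * (1/(((k:ℝ)+1)^2))) := by
    apply Summable.mul_left
    have := (summable_nat_add_iff (f := fun n : ℕ => 1/((n:ℝ)^2)) 1).2
      (Real.summable_one_div_nat_pow.2 (by norm_num))
    simpa using this
  apply Summable.of_nonneg_of_le (fun k => norm_nonneg _) (fun k => ?_) hs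
  rw [psiD_term_eq hx k, Real.norm_eq_abs, abs_div,
    abs_of_nonneg (by positivity : (0:ℝ) ≤ ((k:ℝ)+1)*(x+k))]
  rw [show |x-1|/(min x 1) * (1/(((k:ℝ)+1)^2)) = |x-1| / (min x 1 * ((k:ℝ)+1)^2) from by
    rw [div_mul_div_comm, mul_one]]
  apply div_le_div_of_nonneg_left (abs_nonneg _) (by positivity)
  calc min x 1 * ((k:ℝ)+1)^2 = (min x 1 * ((k:ℝ)+1)) * ((k:ℝ)+1) := by ring
    _ ≤ (x+k) * ((k:ℝ)+1) := by
        apply mul_le_mul_of_nonneg_right (aux_min_bound hx k) (by positivity)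
    _ = ((k:ℝ)+1)*(x+k) := by ring

lemma hasDerivAt_psiD {x : ℝ} (hx : 0 < x) : HasDerivAt psiD (psiT x) x := by
  have hx2 : (0:ℝ) < x/2 := by linarith
  have h : HasDerivAt (fun z => ∑' k : ℕ, (1/((k:ℝ)+1) - 1/(z+k)))
      (∑' k : ℕ, 1/((x+(k:ℝ))^2)) x := by
    apply hasDerivAt_tsum_of_isPreconnected
      (g := fun (k : ℕ) (z : ℝ) => 1/((k:ℝ)+1) - 1/(z+k))
      (g' := fun (k : ℕ) (z : ℝ) => 1/((z+(k:ℝ))^2))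
      (u := fun k : ℕ => 1/((x/2+(k:ℝ))^2))
      (psi_summable hx2 le_rfl) isOpen_Ioi isPreconnected_Ioi
      (t := Ioi (x/2)) (y₀ := x)
    · intro n y hy
      have hy' : (0:ℝ) < y := lt_trans hx2 hy
      have hyn : (0:ℝ) < y + n := by positivity
      have h1 := hasDerivAt_one_div_pow (p := 1) le_rfl (n:ℝ) hyn
      have h2 := h1.const_sub (1/((n:ℝ)+1))
      have e : -(-((1:ℕ):ℝ)/((y+(n:ℝ))^(1+1))) = 1/((y+(n:ℝ))^2) := by push_cast; ring_nf
      rw [e] at h2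
      simpa using h2
    · intro n y hy
      have hy' : (0:ℝ) < y := lt_trans hx2 hy
      have hyn : (0:ℝ) < x/2 + n := by positivity
      rw [Real.norm_eq_abs, abs_of_nonneg (by positivity : (0:ℝ) ≤ 1/((y+(n:ℝ))^2))]
      apply div_le_div_of_nonneg_left one_pos.le (by positivity)
      apply pow_le_pow_left₀ hyn.le (by have : x/2 < y := hy; linarith) _
    · exact mem_Ioi.2 (by linarith)
    · exact psiD_summable hx
    · exact mem_Ioi.2 (by linarith)
  exact h.const_add _

/-- `t ↦ t * psiS3 (t*x)` is strictly decreasing in `t ≥ 1` when `x > 1`. -/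
lemma psi_key2 {x l : ℝ} (hx : 1 < x) (hl : 1 < l) : l * psiS3 (l*x) < psiS3 x := by
  have hx0 : (0:ℝ) < x := by linarith
  have hanti : StrictAntiOn (fun t : ℝ => t * psiS3 (t*x)) (Ici 1) := by
    apply strictAntiOn_of_deriv_neg (convex_Ici 1)
    · apply ContinuousOn.mul continuousOn_id
      intro t ht
      have htx : (0:ℝ) < t*x := by have : (1:ℝ) ≤ t := ht; nlinarith
      exact (((hasDerivAt_psiS3 htx).comp t
        (hasDerivAt_mul_const x)).continuousAt).continuousWithinAt
    · intro t ht
      rw [interior_Ici] at ht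
      have ht1 : (1:ℝ) < t := ht
      have htx : (0:ℝ) < t*x := by nlinarith
      have hd : HasDerivAt (fun t : ℝ => t * psiS3 (t*x))
          (1 * psiS3 (t*x) + t * (-3 * psiS4 (t*x) * x)) t :=
        (hasDerivAt_id t).mul (by have h := (hasDerivAt_psiS3 htx).comp t (hasDerivAt_mul_const x); exact h)
      rw [hd.deriv]
      have hkey := psi_key1 (y := t*x) (by nlinarith)
      nlinarith [hkey]
  have h1 : (1:ℝ) ∈ Ici (1:ℝ) := mem_Ici.2 le_rfl
  have h2 : l ∈ Ici (1:ℝ) := mem_Ici.2 hl.le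
  have := hanti h1 h2 hl
  simpa using this

lemma psi_harmonic_cast (n : ℕ) :
    ((harmonic n : ℚ) : ℝ) = ∑ k ∈ range n, 1/((k:ℝ)+1) := by
  rw [harmonic]
  push_cast
  apply Finset.sum_congr rfl
  intro k _
  rw [one_div]

/-- The constant part `log n - H_{n+1}` tends to `-γ`. -/
lemma psi_const_tendsto :
    Tendsto (fun n : ℕ => Real.log n - ∑ k ∈ range (n+1), 1/((k:ℝ)+1)) atTop
      (𝓝 (-Real.eulerMascheroniConstant)) := by
  have h1 : Tendsto (fun n : ℕ => ((harmonic (n+1) : ℚ) : ℝ) - Real.log (n+1)) atTop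
      (𝓝 Real.eulerMascheroniConstant) := by
    have := Real.tendsto_harmonic_sub_log.comp (tendsto_add_atTop_nat 1)
    apply this.congr
    intro n
    simp only [Function.comp_apply]
    push_cast
    ring
  have h2 : Tendsto (fun n : ℕ => Real.log (n+1) - Real.log n) atTop (𝓝 0) := by
    have hbase : Tendsto (fun n : ℕ => Real.log (1 + 1/(n:ℝ))) atTop (𝓝 0) := by
      have : Tendsto (fun n : ℕ => 1 + 1/(n:ℝ)) atTop (𝓝 1) := by
        simpa using (tendsto_const_nhds (x := (1:ℝ))).add tendsto_one_div_atTop_nhds_zero_nat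
      simpa using this.log one_ne_zero
    apply hbase.congr'
    filter_upwards [eventually_ge_atTop 1] with n hn
    have hn0 : (0:ℝ) < n := by exact_mod_cast hn
    rw [← Real.log_div (by positivity) (ne_of_gt hn0)]
    congr 1
    field_simp
  have h3 := (h1.add h2).neg
  rw [show -(Real.eulerMascheroniConstant + 0) = -Real.eulerMascheroniConstant by ring] at h3
  apply h3.congr
  intro n
  rw [← psi_harmonic_cast (n+1)]
  push_cast
  ring

/-- Uniform convergence of the digamma approximants on `Icc a b`. -/
lemma psi_unif {a b : ℝ} (ha : 0 < a) (ha1 : a ≤ 1) :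
    TendstoUniformlyOn
      (fun (n : ℕ) (y : ℝ) => Real.log n - ∑ k ∈ range (n+1), 1/(y+(k:ℝ)))
      psiD atTop (Icc a b) := by
  -- series part
  have hsb : Summable (fun k : ℕ => ((b+1)/a) * (1/(((k:ℝ)+1)^2))) := by
    apply Summable.mul_left
    have := (summable_nat_add_iff (f := fun n : ℕ => 1/((n:ℝ)^2)) 1).2
      (Real.summable_one_div_nat_pow.2 (by norm_num))
    simpa using this
  have hb_ineq : ∀ (k : ℕ) (y : ℝ), y ∈ Icc a b →
      ‖1/((k:ℝ)+1) - 1/(y+k)‖ ≤ ((b+1)/a) * (1/(((k:ℝ)+1)^2)) := by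
    intro k y hy
    obtain ⟨hya, hyb⟩ := hy
    have hy0 : (0:ℝ) < y := lt_of_lt_of_le ha hya
    have hba : a ≤ b := le_trans hya hyb
    have hyk : (0:ℝ) < y + k := by positivity
    rw [psiD_term_eq hy0 k, Real.norm_eq_abs, abs_div,
      abs_of_nonneg (by positivity : (0:ℝ) ≤ ((k:ℝ)+1)*(y+k))]
    rw [show ((b+1)/a) * (1/(((k:ℝ)+1)^2)) = (b+1) / (a*((k:ℝ)+1)^2) from by
      rw [div_mul_div_comm, mul_one]]
    apply div_le_div₀ (by linarith)
    · rw [abs_le]; constructor <;> nlinarith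
    · positivity
    · calc a * ((k:ℝ)+1)^2 = (a*((k:ℝ)+1)) * ((k:ℝ)+1) := by ring
        _ ≤ (y+k) * ((k:ℝ)+1) := by
            apply mul_le_mul_of_nonneg_right _ (by positivity)
            nlinarith [Nat.cast_nonneg (α := ℝ) k]
        _ = ((k:ℝ)+1)*(y+k) := by ring
  have hser0 : TendstoUniformlyOn
      (fun (N : ℕ) (y : ℝ) => ∑ k ∈ range N, (1/((k:ℝ)+1) - 1/(y+k)))
      (fun y => ∑' k : ℕ, (1/((k:ℝ)+1) - 1/(y+k))) atTop (Icc a b) :=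
    tendstoUniformlyOn_tsum_nat hsb (fun k y hy => hb_ineq k y hy)
  have hser : TendstoUniformlyOn
      (fun (n : ℕ) (y : ℝ) => ∑ k ∈ range (n+1), (1/((k:ℝ)+1) - 1/(y+k)))
      (fun y => ∑' k : ℕ, (1/((k:ℝ)+1) - 1/(y+k))) atTop (Icc a b) :=
    fun u hu => (tendsto_add_atTop_nat 1).eventually (hser0 u hu)
  -- constant part
  have hconst : TendstoUniformlyOn
      (fun (n : ℕ) (_ : ℝ) => Real.log n - ∑ k ∈ range (n+1), 1/((k:ℝ)+1))
      (fun _ => -Real.eulerMascheroniConstant) atTop (Icc a b) := by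
    rw [Metric.tendstoUniformlyOn_iff]
    intro ε hε
    have := (Metric.tendsto_nhds.mp psi_const_tendsto) ε hε
    filter_upwards [this] with n hn y _
    rw [dist_comm] at hn
    exact hn
  have hadd := hconst.add hser
  have h1 : TendstoUniformlyOn
      (fun (n : ℕ) (y : ℝ) => Real.log n - ∑ k ∈ range (n+1), 1/(y+(k:ℝ)))
      ((fun _ => -Real.eulerMascheroniConstant) + fun y => ∑' k : ℕ, (1/((k:ℝ)+1) - 1/(y+k)))
      atTop (Icc a b) := by
    apply hadd.congr
    filter_upwards with n
    intro y _
    simp only [Pi.add_apply]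
    rw [Finset.sum_sub_distrib]
    ring
  apply h1.congr_right
  intro y _
  simp only [Pi.add_apply]
  rfl

lemma psi_loc_unif : TendstoLocallyUniformlyOn
    (fun (n : ℕ) (y : ℝ) => Real.log n - ∑ k ∈ range (n+1), 1/(y+(k:ℝ)))
    psiD atTop (Ioi 0) := by
  apply ((tendstoLocallyUniformlyOn_TFAE
    (fun (n : ℕ) (y : ℝ) => Real.log n - ∑ k ∈ range (n+1), 1/(y+(k:ℝ)))
    psiD atTop isOpen_Ioi).out 0 2).2
  intro x hx
  have hx0 : (0:ℝ) < x := hx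
  refine ⟨Icc (min (x/2) 1) (x+1), ?_, psi_unif (lt_min (by linarith) one_pos) (min_le_right _ _)⟩
  apply mem_nhdsWithin_of_mem_nhds
  apply Icc_mem_nhds ?_ (by linarith)
  rcases le_total (x/2) 1 with h|h
  · rw [min_eq_left h]; linarith
  · rw [min_eq_right h]
    have : (1:ℝ) ≤ x/2 := h
    linarith

lemma psi_hasDerivAt_logGamma {x : ℝ} (hx : 0 < x) :
    HasDerivAt (fun y : ℝ => Real.log (Real.Gamma y)) (psiD x) x := by
  apply hasDerivAt_of_tendstoLocallyUniformlyOn isOpen_Ioi psi_loc_unif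
    (f := fun (n : ℕ) (y : ℝ) =>
      y * Real.log n + Real.log (Nat.factorial n) - ∑ k ∈ range (n+1), Real.log (y+k))
    ?_ ?_ (mem_Ioi.2 hx)
  · filter_upwards with n
    intro y hy
    have hy0 : (0:ℝ) < y := hy
    have h1 : HasDerivAt (fun y : ℝ => y * Real.log n) (Real.log n) y :=
      hasDerivAt_mul_const _
    have h2 : HasDerivAt (fun y : ℝ => ∑ k ∈ range (n+1), Real.log (y+k))
        (∑ k ∈ range (n+1), 1/(y+(k:ℝ))) y := by
      apply HasDerivAt.fun_sum
      intro k _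
      have hyk : (0:ℝ) < y + k := by positivity
      have := ((hasDerivAt_id y).add_const ((k:ℕ):ℝ)).log (ne_of_gt hyk)
      simpa using this
    exact (h1.add_const (Real.log (Nat.factorial n))).sub h2
  · intro y hy
    have hy0 : (0:ℝ) < y := hy
    have hG : Real.Gamma y ≠ 0 := ne_of_gt (Real.Gamma_pos_of_pos hy0)
    have h := (Real.GammaSeq_tendsto_Gamma y).log hG
    apply h.congr'
    filter_upwards [eventually_ge_atTop 1] with n hn
    have hn0 : (0:ℝ) < n := by exact_mod_cast hn
    have hprodpos : ∀ j ∈ range (n+1), y + (j:ℝ) ≠ 0 := by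
      intro j _
      have : (0:ℝ) < y + j := by positivity
      exact ne_of_gt this
    have hprod : (0:ℝ) < ∏ j ∈ range (n+1), (y + (j:ℝ)) :=
      Finset.prod_pos (fun j _ => by positivity)
    rw [Real.GammaSeq, Real.log_div (by positivity) (ne_of_gt hprod),
      Real.log_mul (by positivity) (by positivity), Real.log_rpow hn0,
      Real.log_prod hprodpos]


lemma digamma_eq {x : ℝ} (hx : 0 < x) : digamma x = psiD x :=
  (psi_hasDerivAt_logGamma hx).deriv

lemma trigamma_eq {x : ℝ} (hx : 0 < x) : trigamma x = psiT x := by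
  have hev : digamma =ᶠ[𝓝 x] psiD := by
    filter_upwards [isOpen_Ioi.mem_nhds (mem_Ioi.2 hx)] with y hy
    exact digamma_eq hy
  rw [trigamma, hev.deriv_eq, (hasDerivAt_psiD hx).deriv]

lemma psi_strictAnti {l : ℝ} (hl : 1 < l) :
    StrictAntiOn (fun x => psiT x - psiT (l*x)) (Ici 1) := by
  have hl0 : (0:ℝ) < l := by linarith
  apply strictAntiOn_of_deriv_neg (convex_Ici 1)
  · intro x hx
    have hx0 : (0:ℝ) < x := lt_of_lt_of_le one_pos hx
    have hlx : (0:ℝ) < l*x := by positivity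
    exact (((hasDerivAt_psiT hx0).sub
      ((hasDerivAt_psiT hlx).comp x ((hasDerivAt_id x).const_mul l))).continuousAt).continuousWithinAt
  · intro x hx
    rw [interior_Ici] at hx
    have hx1 : (1:ℝ) < x := hx
    have hx0 : (0:ℝ) < x := by linarith
    have hlx : (0:ℝ) < l*x := by positivity
    have hd : HasDerivAt (fun x => psiT x - psiT (l*x))
        (-2 * psiS3 x - -2 * psiS3 (l*x) * (l*1)) x :=
      (hasDerivAt_psiT hx0).sub ((hasDerivAt_psiT hlx).comp x ((hasDerivAt_id x).const_mul l))
    rw [hd.deriv]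
    have := psi_key2 hx1 hl
    nlinarith [this]

/-- For positive integers `a_h > a_0 ≥ 1` and `λ > 1`,
`V₀ = [ψ₁(a_h) - ψ₁(λ a_h)] - [ψ₁(a_0) - ψ₁(λ a_0)] < 0`. -/
theorem stmt10 (l : ℝ) (hl : 1 < l) (ah a0 : ℕ) (ha0 : 1 ≤ a0)
    (hlt : a0 < ah) :
    (trigamma (ah : ℝ) - trigamma (l * (ah : ℝ)))
        - (trigamma (a0 : ℝ) - trigamma (l * (a0 : ℝ))) < 0 := by
  have h0 : (1:ℝ) ≤ (a0:ℝ) := by exact_mod_cast ha0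
  have hh : (a0:ℝ) < (ah:ℝ) := by exact_mod_cast hlt
  have h1 : (1:ℝ) ≤ (ah:ℝ) := by linarith
  have hp0 : (0:ℝ) < (a0:ℝ) := by linarith
  have hph : (0:ℝ) < (ah:ℝ) := by linarith
  have hl0 : (0:ℝ) < l := by linarith
  rw [trigamma_eq hph, trigamma_eq hp0, trigamma_eq (by positivity), trigamma_eq (by positivity)]
  have := psi_strictAnti hl (mem_Ici.2 h0) (mem_Ici.2 h1) hh
  simp only at this
  linarith
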